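/- Let D be a weighted L^p metric on ℝ^d, g(t) = exp(-2D(0,t))/Z the Laplace smoothing density, f : ℝ^d → Y any function with Y finite, and define the smoothed model ĝf(x)[y] = ∫ 1[f(x+t)=y]·g(t) dt. Then the smoothed model is individually fair under D: for all x, ε, TV(ĝf(x), ĝf(x+ε)) ≤ D(x, x+ε). -/

import Mathlib

open Finset MeasureTheory in
private lemma exp_tanh_aux {c : ℝ} (hc : 0 ≤ c) :
    Real.exp (2 * c) - 1 ≤ c * (Real.exp (2 * c) + 1) := by
  set F : ℝ → ℝ := fun s => (1 + s) * Real.exp (-2 * s) - (1 - s) with hF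
  have hderiv : ∀ s : ℝ, HasDerivAt F (1 - (1 + 2 * s) * Real.exp (-2 * s)) s := by
    intro s
    have h1 : HasDerivAt (fun s : ℝ => -2 * s) (-2) s := by
      simpa using (hasDerivAt_id s).const_mul (-2 : ℝ)
    have h2 : HasDerivAt (fun s : ℝ => Real.exp (-2 * s)) (Real.exp (-2 * s) * (-2)) s :=
      (Real.hasDerivAt_exp _).comp s h1
    have h3 : HasDerivAt (fun s : ℝ => 1 + s) 1 s := by
      simpa using (hasDerivAt_id s).const_add (1 : ℝ)
    have h5 : HasDerivAt (fun s : ℝ => 1 - s) (-1) s := by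
      exact (hasDerivAt_id s).const_sub (1 : ℝ)
    have h4 := (h3.mul h2).sub h5
    exact h4.congr_deriv (by ring)
  have hmono : Monotone F := by
    apply monotone_of_deriv_nonneg
    · exact fun s => (hderiv s).differentiableAt
    · intro s
      rw [(hderiv s).deriv]
      have he : Real.exp (-2 * s) * Real.exp (2 * s) = 1 := by
        rw [← Real.exp_add]; norm_num
      have h1 := Real.add_one_le_exp (2 * s)
      nlinarith [Real.exp_pos (-2 * s), Real.exp_pos (2 * s)]
  have h0 : F 0 ≤ F c := hmono hc
  have hF0 : F 0 = 0 := by simp [hF]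
  have hFc : 0 ≤ (1 + c) * Real.exp (-2 * c) - (1 - c) := by
    rw [hF0] at h0; exact h0
  have he : Real.exp (-2 * c) * Real.exp (2 * c) = 1 := by
    rw [← Real.exp_add]; norm_num
  nlinarith [Real.exp_pos (2 * c), Real.exp_pos (-2 * c)]

open Classical in

open Finset MeasureTheory in
theorem stmt_7 {d : ℕ} {Y : Type*} [Fintype Y] [MeasurableSpace Y] [MeasurableSingletonClass Y]
    (p : ℝ) (hp : 1 ≤ p) (w : Fin d → ℝ) (hw : ∀ i, 0 ≤ w i)
    (D : (Fin d → ℝ) → (Fin d → ℝ) → ℝ)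
    (hD : ∀ x1 x2, D x1 x2 = (∑ i, w i * |x1 i - x2 i| ^ p) ^ (1 / p))
    (Z : ℝ) (hZ : Z = ∫ t : Fin d → ℝ, Real.exp (-2 * D 0 t)) (hZpos : 0 < Z)
    (g : (Fin d → ℝ) → ℝ) (hg : ∀ t, g t = Real.exp (-2 * D 0 t) / Z)
    (f : (Fin d → ℝ) → Y) (hf : Measurable f)
    (sm : (Fin d → ℝ) → Y → ℝ)
    (hsm : ∀ x y, sm x y = ∫ t : Fin d → ℝ, (if f (x + t) = y then (1 : ℝ) else 0) * g t) :
    ∀ x ε : Fin d → ℝ,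
      (1 / 2) * ∑ y, |sm x y - sm (x + ε) y| ≤ D x (x + ε) := by
  intro x ε
  have hp0 : (0:ℝ) < p := lt_of_lt_of_le one_pos hp
  -- rewrite D terms with weights absorbed
  have hterm : ∀ (i : Fin d) (a : ℝ), w i * |a| ^ p = |w i ^ (1/p) * a| ^ p := by
    intro i a
    rw [abs_mul, Real.mul_rpow (abs_nonneg _) (abs_nonneg _),
      abs_of_nonneg (Real.rpow_nonneg (hw i) _), ← Real.rpow_mul (hw i),
      one_div_mul_cancel (ne_of_gt hp0), Real.rpow_one]
  have hDform : ∀ x1 x2 : Fin d → ℝ,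
      D x1 x2 = (∑ i, |w i ^ (1/p) * (x1 i - x2 i)| ^ p) ^ (1/p) := by
    intro x1 x2
    rw [hD]
    congr 1
    exact Finset.sum_congr rfl fun i _ => hterm i _
  have hDnn : ∀ a b : Fin d → ℝ, 0 ≤ D a b := by
    intro a b
    rw [hD]
    exact Real.rpow_nonneg (Finset.sum_nonneg fun i _ =>
      mul_nonneg (hw i) (Real.rpow_nonneg (abs_nonneg _) _)) _
  have habsD : ∀ (a b a' b' : Fin d → ℝ), (∀ i, |a i - b i| = |a' i - b' i|) →
      D a b = D a' b' := by
    intro a b a' b' h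
    simp only [hD]
    congr 1
    exact Finset.sum_congr rfl fun i _ => by rw [h i]
  have htri : ∀ u v : Fin d → ℝ, D 0 (u + v) ≤ D 0 u + D 0 v := by
    intro u v
    calc D 0 (u + v)
        = (∑ i, |(w i ^ (1/p) * ((0:Fin d → ℝ) i - u i)) +
            (w i ^ (1/p) * ((0:Fin d → ℝ) i - v i))| ^ p) ^ (1/p) := by
          rw [hDform]
          congr 1
          refine Finset.sum_congr rfl fun i _ => ?_
          congr 2
          simp only [Pi.add_apply, Pi.zero_apply]
          ring
      _ ≤ _ := by
          rw [hDform 0 u, hDform 0 v]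
          exact Real.Lp_add_le _ _ _ hp
  set c := D x (x + ε) with hcdef
  have hcnn : 0 ≤ c := hDnn _ _
  have hc0 : D 0 ε = c := habsD _ _ _ _ (fun i => by
    simp only [Pi.add_apply, Pi.zero_apply]
    rw [show x i - (x i + ε i) = -(ε i) by ring, abs_neg, zero_sub, abs_neg])
  have hcneg : D 0 (-ε) = c := by
    rw [← hc0]
    exact habsD _ _ _ _ (fun i => by
      simp only [Pi.neg_apply, Pi.zero_apply, zero_sub, abs_neg])
  -- triangle inequalities
  have hA : ∀ t : Fin d → ℝ, D 0 t ≤ D 0 (t - ε) + c := by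
    intro t
    have := htri (t - ε) ε
    rw [sub_add_cancel, hc0] at this
    exact this
  have hB : ∀ t : Fin d → ℝ, D 0 (t - ε) ≤ D 0 t + c := by
    intro t
    have := htri t (-ε)
    rw [← sub_eq_add_neg, hcneg] at this
    exact this
  -- density facts
  set φ : (Fin d → ℝ) → ℝ := fun t => Real.exp (-2 * D 0 t) with hφdef
  have hφm : Measurable φ := by
    have e : φ = fun t : Fin d → ℝ =>
        Real.exp (-2 * (∑ i, w i * |(0:Fin d → ℝ) i - t i| ^ p) ^ (1/p)) := by
      funext t; rw [hφdef]; simp only; rw [hD]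
    rw [e]
    fun_prop
  have hφint : Integrable φ := by
    by_contra h
    rw [integral_undef h] at hZ
    exact hZpos.ne' hZ
  have hφpos : ∀ t, 0 < φ t := fun t => Real.exp_pos _
  have hgeq : g = fun t => φ t / Z := funext hg
  have hgm : Measurable g := by rw [hgeq]; exact hφm.div_const Z
  have hgint : Integrable g := by rw [hgeq]; exact hφint.div_const Z
  have hgnn : ∀ t, 0 ≤ g t := fun t => by
    rw [hg t]; exact div_nonneg (Real.exp_pos _).le hZpos.le
  have hgone : (∫ t, g t) = 1 := by
    rw [hgeq, integral_div, ← hZ, div_self hZpos.ne']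
  have hgεint : Integrable (fun t => g (t - ε)) := hgint.comp_sub_right ε
  have hgεone : (∫ t, g (t - ε)) = 1 := by
    rw [integral_sub_right_eq_self g ε, hgone]
  -- pointwise exponential bounds
  have hφle : ∀ s t : Fin d → ℝ, D 0 t ≤ D 0 s + c → φ s ≤ Real.exp (2 * c) * φ t := by
    intro s t hst
    rw [hφdef]
    simp only
    rw [← Real.exp_add]
    exact Real.exp_le_exp.mpr (by linarith)
  have hgle1 : ∀ t, g t ≤ Real.exp (2 * c) * g (t - ε) := by
    intro t
    rw [hg t, hg (t - ε), ← mul_div_assoc]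
    exact div_le_div_of_nonneg_right (hφle t (t - ε) (hB t)) hZpos.le
  have hgle2 : ∀ t, g (t - ε) ≤ Real.exp (2 * c) * g t := by
    intro t
    rw [hg t, hg (t - ε), ← mul_div_assoc]
    exact div_le_div_of_nonneg_right (hφle (t - ε) t (hA t)) hZpos.le
  -- the indicator of the set S
  set x' := x + ε with hx'def
  set S : Finset Y := Finset.univ.filter (fun y => sm x' y ≤ sm x y) with hSdef
  set h : (Fin d → ℝ) → ℝ := fun t => if f (x + t) ∈ S then 1 else 0 with hhdef
  have hhm : Measurable h := by
    rw [hhdef]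
    refine Measurable.ite ?_ measurable_const measurable_const
    exact (hf.comp (measurable_id.const_add x)) (S.measurableSet)
  have hh01 : ∀ t, 0 ≤ h t ∧ h t ≤ 1 := by
    intro t
    rw [hhdef]
    by_cases hm : f (x + t) ∈ S <;> simp [hm]
  -- integrability of products
  have hprod_int : ∀ (k : (Fin d → ℝ) → ℝ), Measurable k → Integrable k → (∀ t, 0 ≤ k t) →
      ∀ (q : (Fin d → ℝ) → ℝ), Measurable q → (∀ t, 0 ≤ q t ∧ q t ≤ 1) →
      Integrable (fun t => q t * k t) := by
    intro k hkm hkint hknn q hqm hq01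
    refine hkint.mono' ((hqm.mul hkm).aestronglyMeasurable) ?_
    filter_upwards with t
    rw [Real.norm_eq_abs, abs_mul, abs_of_nonneg (hq01 t).1, abs_of_nonneg (hknn t)]
    calc q t * k t ≤ 1 * k t := mul_le_mul_of_nonneg_right (hq01 t).2 (hknn t)
      _ = k t := one_mul _
  have hgεm : Measurable (fun t => g (t - ε)) := hgm.comp (measurable_id.sub_const ε)
  have hgεnn : ∀ t, 0 ≤ g (t - ε) := fun t => hgnn _
  have hint1 : Integrable (fun t => h t * g t) :=
    hprod_int g hgm hgint hgnn h hhm hh01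
  have hint2 : Integrable (fun t => h t * g (t - ε)) :=
    hprod_int _ hgεm hgεint hgεnn h hhm hh01
  -- indicator of single labels
  have hym : ∀ (x0 : Fin d → ℝ) (y : Y),
      Measurable (fun t => if f (x0 + t) = y then (1:ℝ) else 0) := by
    intro x0 y
    refine Measurable.ite ?_ measurable_const measurable_const
    exact (hf.comp (measurable_id.const_add x0)) (measurableSet_singleton y)
  have hy01 : ∀ (x0 : Fin d → ℝ) (y : Y) (t : Fin d → ℝ),
      0 ≤ (if f (x0 + t) = y then (1:ℝ) else 0) ∧ (if f (x0 + t) = y then (1:ℝ) else 0) ≤ 1 := by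
    intro x0 y t
    by_cases hm : f (x0 + t) = y <;> simp [hm]
  have hyint : ∀ (x0 : Fin d → ℝ) (y : Y),
      Integrable (fun t => (if f (x0 + t) = y then (1:ℝ) else 0) * g t) := fun x0 y =>
    hprod_int g hgm hgint hgnn _ (hym x0 y) (hy01 x0 y)
  have hyεint : ∀ (y : Y),
      Integrable (fun t => (if f (x + t) = y then (1:ℝ) else 0) * g (t - ε)) := fun y =>
    hprod_int _ hgεm hgεint hgεnn _ (hym x y) (hy01 x y)
  -- shift formula for sm x'
  have hshift : ∀ y, sm x' y = ∫ t, (if f (x + t) = y then (1:ℝ) else 0) * g (t - ε) := by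
    intro y
    rw [hsm]
    rw [← integral_add_right_eq_self
      (fun t => (if f (x + t) = y then (1:ℝ) else 0) * g (t - ε)) ε]
    congr 1
    funext t
    beta_reduce
    rw [add_sub_cancel_right, show x + (t + ε) = x' + t by rw [hx'def]; abel]
  -- sums over a finset of labels
  have hsum_x : ∀ T : Finset Y,
      ∑ y ∈ T, sm x y = ∫ t, (if f (x + t) ∈ T then (1:ℝ) else 0) * g t := by
    intro T
    simp only [hsm]
    rw [← integral_finset_sum T (fun y _ => hyint x y)]
    congr 1
    funext t
    rw [← Finset.sum_mul, Finset.sum_ite_eq T (f (x + t)) (fun _ => (1:ℝ))]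
  have hsum_x' : ∀ T : Finset Y,
      ∑ y ∈ T, sm x' y = ∫ t, (if f (x + t) ∈ T then (1:ℝ) else 0) * g (t - ε) := by
    intro T
    simp only [hshift]
    rw [← integral_finset_sum T (fun y _ => hyεint y)]
    congr 1
    funext t
    rw [← Finset.sum_mul, Finset.sum_ite_eq T (f (x + t)) (fun _ => (1:ℝ))]
  -- totals equal 1
  have htot_x : ∑ y, sm x y = 1 := by
    rw [hsum_x Finset.univ]
    simp only [Finset.mem_univ, if_true]
    simp only [one_mul]
    exact hgone
  have htot_x' : ∑ y, sm x' y = 1 := by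
    rw [hsum_x' Finset.univ]
    simp only [Finset.mem_univ, if_true]
    simp only [one_mul]
    exact hgεone
  -- a and b
  set a := ∫ t, h t * g t with hadef
  set b := ∫ t, h t * g (t - ε) with hbdef
  have haS : ∑ y ∈ S, sm x y = a := by rw [hsum_x S, hadef]
  have hbS : ∑ y ∈ S, sm x' y = b := by rw [hsum_x' S, hbdef]
  -- main integral inequalities
  have hab : a ≤ Real.exp (2 * c) * b := by
    rw [hadef, hbdef, ← integral_const_mul]
    apply integral_mono hint1 (hint2.const_mul _)
    intro t
    calc h t * g t ≤ h t * (Real.exp (2 * c) * g (t - ε)) :=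
          mul_le_mul_of_nonneg_left (hgle1 t) (hh01 t).1
      _ = Real.exp (2 * c) * (h t * g (t - ε)) := by ring
  have hint3 : Integrable (fun t => (1 - h t) * g (t - ε)) := by
    have e : (fun t => (1 - h t) * g (t - ε)) = fun t => g (t - ε) - h t * g (t - ε) := by
      funext t; ring
    rw [e]
    exact hgεint.sub hint2
  have hint4 : Integrable (fun t => (1 - h t) * g t) := by
    have e : (fun t => (1 - h t) * g t) = fun t => g t - h t * g t := by
      funext t; ring
    rw [e]
    exact hgint.sub hint1
  have h1ab : 1 - b ≤ Real.exp (2 * c) * (1 - a) := by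
    have e3 : (∫ t, (1 - h t) * g (t - ε)) = 1 - b := by
      have e : (fun t => (1 - h t) * g (t - ε)) = fun t => g (t - ε) - h t * g (t - ε) := by
        funext t; ring
      rw [e, integral_sub hgεint hint2, hgεone, hbdef]
    have e4 : (∫ t, (1 - h t) * g t) = 1 - a := by
      have e : (fun t => (1 - h t) * g t) = fun t => g t - h t * g t := by
        funext t; ring
      rw [e, integral_sub hgint hint1, hgone, hadef]
    rw [← e3, ← e4, ← integral_const_mul]
    apply integral_mono hint3 (hint4.const_mul _)
    intro t
    have hnn : 0 ≤ 1 - h t := by linarith [(hh01 t).2]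
    calc (1 - h t) * g (t - ε) ≤ (1 - h t) * (Real.exp (2 * c) * g t) :=
          mul_le_mul_of_nonneg_left (hgle2 t) hnn
      _ = Real.exp (2 * c) * ((1 - h t) * g t) := by ring
  -- the sum of absolute values equals 2 * (a - b)
  have hsplit : ∑ y, |sm x y - sm x' y| = 2 * (a - b) := by
    have h1 : ∑ y ∈ S, |sm x y - sm x' y| = a - b := by
      rw [← haS, ← hbS, ← Finset.sum_sub_distrib]
      refine Finset.sum_congr rfl fun y hy => ?_
      rw [hSdef] at hy
      exact abs_of_nonneg (sub_nonneg.mpr (Finset.mem_filter.mp hy).2)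
    have h2 : ∑ y ∈ Finset.univ.filter (fun y => ¬ (sm x' y ≤ sm x y)), |sm x y - sm x' y|
        = (1 - b) - (1 - a) := by
      have hsub1 : ∑ y ∈ Finset.univ.filter (fun y => ¬ (sm x' y ≤ sm x y)), sm x y = 1 - a := by
        have := Finset.sum_filter_add_sum_filter_not Finset.univ
          (fun y => sm x' y ≤ sm x y) (fun y => sm x y)
        rw [← hSdef] at this
        rw [haS] at this
        linarith [htot_x, this]
      have hsub2 : ∑ y ∈ Finset.univ.filter (fun y => ¬ (sm x' y ≤ sm x y)), sm x' y = 1 - b := by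
        have := Finset.sum_filter_add_sum_filter_not Finset.univ
          (fun y => sm x' y ≤ sm x y) (fun y => sm x' y)
        rw [← hSdef] at this
        rw [hbS] at this
        linarith [htot_x', this]
      rw [← hsub1, ← hsub2, ← Finset.sum_sub_distrib]
      refine Finset.sum_congr rfl fun y hy => ?_
      have hy' := (Finset.mem_filter.mp hy).2
      push_neg at hy'
      rw [abs_of_neg (by linarith), neg_sub]
    have h3 := Finset.sum_filter_add_sum_filter_not Finset.univ
      (fun y => sm x' y ≤ sm x y) (fun y => |sm x y - sm x' y|)
    rw [← hSdef] at h3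
    rw [h1, h2] at h3
    linarith
  -- final arithmetic
  rw [hsplit]
  have hE1 : (1:ℝ) ≤ Real.exp (2 * c) := by
    rw [show (1:ℝ) = Real.exp 0 by simp]
    exact Real.exp_le_exp.mpr (by linarith)
  have hkey : (Real.exp (2 * c) + 1) * (a - b) ≤ Real.exp (2 * c) - 1 := by nlinarith [hab, h1ab]
  have htanh := exp_tanh_aux hcnn
  have hfinal : a - b ≤ c := by
    have hpos : (0:ℝ) < Real.exp (2 * c) + 1 := by positivity
    have h5 : (Real.exp (2 * c) + 1) * (a - b) ≤ (Real.exp (2 * c) + 1) * c := by nlinarith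
    exact (mul_le_mul_iff_right₀ hpos).mp h5
  linarith
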